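/- Let m_1, …, m_k be natural numbers, put m = m_1 + ⋯ + m_k and n = m_1 + 2m_2 + ⋯ + k·m_k. If n is prime, then m divides the multinomial coefficient m!/(m_1!⋯m_k!), unless m_1 = m = n and all other m_i = 0. -/

import Mathlib

open Finset
open Nat (factorial)
local notation:10000 n "!" => Nat.factorial n

private lemma multinomial_key (k : ℕ) (f : Fin k → ℕ) (j : Fin k) (hj : 0 < f j) :
    f j * Nat.multinomial Finset.univ f =
      (∑ i, f i) * Nat.multinomial Finset.univ (Function.update f j (f j - 1)) := by
  set g := Function.update f j (f j - 1) with hg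
  have hmem : j ∈ (Finset.univ : Finset (Fin k)) := Finset.mem_univ j
  have hsum : ∑ i, f i = (∑ i, g i) + 1 := by
    rw [hg, Finset.sum_update_of_mem hmem, Finset.sdiff_singleton_eq_erase,
      ← Finset.add_sum_erase _ f hmem]
    omega
  have hprod : ∏ i, (f i)! = f j * ∏ i, (g i)! := by
    rw [← Finset.mul_prod_erase _ (fun i => Nat.factorial (f i)) hmem,
      ← Finset.mul_prod_erase _ (fun i => Nat.factorial (g i)) hmem,
      show g j = f j - 1 from Function.update_self .., ← mul_assoc,
      Nat.mul_factorial_pred hj.ne']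
    congr 1
    refine Finset.prod_congr rfl fun i hi => ?_
    rw [hg, Function.update_of_ne (Finset.ne_of_mem_erase hi)]
  have hpos : 0 < ∏ i, (g i)! := Finset.prod_pos fun i _ => Nat.factorial_pos _
  apply Nat.eq_of_mul_eq_mul_right hpos
  calc f j * Nat.multinomial Finset.univ f * ∏ i, (g i)!
      = Nat.multinomial Finset.univ f * (f j * ∏ i, (g i)!) := by ring
    _ = (∏ i, (f i)!) * Nat.multinomial Finset.univ f := by rw [← hprod]; ring
    _ = (∑ i, f i)! := Nat.multinomial_spec _ _
    _ = ((∑ i, g i) + 1)! := by rw [hsum]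
    _ = ((∑ i, g i) + 1) * (∑ i, g i)! := rfl
    _ = (∑ i, f i) * ((∏ i, (g i)!) * Nat.multinomial Finset.univ g) := by
        rw [Nat.multinomial_spec, hsum]
    _ = (∑ i, f i) * Nat.multinomial Finset.univ g * ∏ i, (g i)! := by ring

/-- Let `m = m_1 + ⋯ + m_k` and `n = m_1 + 2m_2 + ⋯ + k·m_k`.  If `n` is prime then
`m` divides the multinomial coefficient `m!/(m_1!⋯m_k!)`, unless `m_1 = m = n` and all
other `m_i = 0`. -/
theorem dvd_multinomial_of_prime (k : ℕ) (f : Fin k → ℕ)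
    (m n : ℕ) (hm : m = ∑ i, f i) (hn : n = ∑ i : Fin k, (i.val + 1) * f i)
    (hprime : n.Prime)
    (hexc : ¬ (m = n ∧ ∀ i : Fin k, 0 < i.val → f i = 0)) :
    m ∣ Nat.multinomial Finset.univ f := by
  set M := Nat.multinomial Finset.univ f with hM
  -- m > 0
  have hm0 : 0 < m := by
    rcases Nat.eq_zero_or_pos m with h | h
    · exfalso
      have hall : ∀ i : Fin k, f i = 0 := by
        intro i
        have := Finset.sum_eq_zero_iff.mp (hm.symm.trans h)
        exact this i (Finset.mem_univ i)
      have : n = 0 := by simp [hn, hall]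
      exact hprime.ne_zero this
    · exact h
  -- the gcd of the f i is 1
  set g := Finset.gcd Finset.univ f with hgdef
  have hgm : g ∣ m := hm ▸ Finset.dvd_sum fun i _ => Finset.gcd_dvd (Finset.mem_univ i)
  have hgn : g ∣ n := hn ▸ Finset.dvd_sum fun i _ =>
    Dvd.dvd.mul_left (Finset.gcd_dvd (Finset.mem_univ i)) _
  have hmn : m ≤ n := by
    rw [hm, hn]
    exact Finset.sum_le_sum fun i _ => Nat.le_mul_of_pos_left _ (Nat.succ_pos _)
  have hg1 : g = 1 := by
    rcases (Nat.dvd_prime hprime).mp hgn with h1 | hgn'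
    · exact h1
    · exfalso
      -- g = n divides m, m ≤ n, m > 0 ⇒ m = n
      have hnm : n ∣ m := hgn' ▸ hgm
      have hmeq : m = n := Nat.le_antisymm hmn (Nat.le_of_dvd hm0 hnm)
      apply hexc
      refine ⟨hmeq, fun i hi => ?_⟩
      have hzero : ∑ i : Fin k, i.val * f i = 0 := by
        have : ∑ i : Fin k, (i.val + 1) * f i = ∑ i : Fin k, (i.val * f i + f i) := by
          apply Finset.sum_congr rfl; intro i _; ring
        rw [this, Finset.sum_add_distrib] at hn
        omega
      have := (Finset.sum_eq_zero_iff.mp hzero) i (Finset.mem_univ i)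
      rcases Nat.mul_eq_zero.mp this with h | h
      · omega
      · exact h
  -- m divides f j * M for every j
  have hdvd : ∀ j : Fin k, m ∣ f j * M := by
    intro j
    rcases Nat.eq_zero_or_pos (f j) with h | h
    · simp [h]
    · rw [hM, multinomial_key k f j h, ← hm]
      exact Dvd.intro _ rfl
  -- conclude
  have : m ∣ Finset.gcd Finset.univ (fun j => f j * M) :=
    Finset.dvd_gcd fun j _ => hdvd j
  rwa [Finset.gcd_mul_right, ← hgdef, hg1, one_mul, normalize_eq] at this
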